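/- Let n ≥ 2 and let f be a Schwartz function on ℝ^{1+n} such that Lf(z,θ) = 0 for all z ∈ ℝ^n and θ ∈ S^{n-1}. Then f̂(τ,ξ) = 0 for every (τ,ξ) with |τ| ≤ |ξ| (in particular f̂ vanishes on the closed space-like cone, including the light cone τ² = |ξ|²). (This is the exact, Fourier-support counterpart of the statement that the light ray transform determines space-like singularities.) -/

import Mathlib

open MeasureTheory

/-- Existence of a unit vector with prescribed inner product `-τ` against `ξ`, `|τ| ≤ ‖ξ‖`. -/
lemma exists_unit_inner_eq (n : ℕ) (hn : 2 ≤ n) (τ : ℝ) (ξ : EuclideanSpace ℝ (Fin n))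
    (hτξ : |τ| ≤ ‖ξ‖) : ∃ θ : EuclideanSpace ℝ (Fin n), ‖θ‖ = 1 ∧ (inner ℝ θ ξ : ℝ) = -τ := by
  by_cases hξ : ξ = 0
  · have hτ : τ = 0 := by
      have := hτξ; rw [hξ, norm_zero] at this
      have := abs_nonneg τ
      nlinarith [abs_nonneg τ, le_abs_self τ, neg_abs_le τ]
    refine ⟨EuclideanSpace.single (⟨0, by omega⟩ : Fin n) (1 : ℝ), ?_, ?_⟩
    · simp [EuclideanSpace.norm_single]
    · simp [hξ, hτ]
  · -- pick a unit vector orthogonal to ξ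
    obtain ⟨η, hη1, hηξ⟩ : ∃ η : EuclideanSpace ℝ (Fin n), ‖η‖ = 1 ∧ (inner ℝ η ξ : ℝ) = 0 := by
      have hfin : Module.finrank ℝ (ℝ ∙ ξ) = 1 := finrank_span_singleton hξ
      have htot : Module.finrank ℝ (ℝ ∙ ξ) + Module.finrank ℝ (ℝ ∙ ξ)ᗮ
          = Module.finrank ℝ (EuclideanSpace ℝ (Fin n)) :=
        Submodule.finrank_add_finrank_orthogonal _
      rw [hfin, finrank_euclideanSpace_fin] at htot
      have hne : (ℝ ∙ ξ)ᗮ ≠ ⊥ := by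
        intro h
        rw [h, finrank_bot] at htot
        omega
      obtain ⟨v, hv, hv0⟩ := Submodule.exists_mem_ne_zero_of_ne_bot hne
      refine ⟨(‖v‖⁻¹ : ℝ) • v, ?_, ?_⟩
      · rw [norm_smul, norm_inv, norm_norm,
          inv_mul_cancel₀ (norm_ne_zero_iff.mpr hv0)]
      · have h0 : (inner ℝ ξ v : ℝ) = 0 :=
          (Submodule.mem_orthogonal _ v).1 hv ξ (Submodule.mem_span_singleton_self ξ)
        rw [real_inner_smul_left, real_inner_comm, h0, mul_zero]
    have hξpos : (0 : ℝ) < ‖ξ‖ := norm_pos_iff.mpr hξ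
    set a : ℝ := -τ / ‖ξ‖ ^ 2 with ha
    set b : ℝ := Real.sqrt (1 - τ ^ 2 / ‖ξ‖ ^ 2) with hb
    have hbsq : b ^ 2 = 1 - τ ^ 2 / ‖ξ‖ ^ 2 := by
      rw [hb, Real.sq_sqrt]
      have hτ2 : τ ^ 2 ≤ ‖ξ‖ ^ 2 := by
        have := sq_abs τ
        nlinarith [sq_abs τ, abs_nonneg τ, norm_nonneg ξ]
      have : τ ^ 2 / ‖ξ‖ ^ 2 ≤ 1 := by
        rw [div_le_one (by positivity)]; exact hτ2
      linarith
    refine ⟨a • ξ + b • η, ?_, ?_⟩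
    · have horth : (inner ℝ (a • ξ) (b • η) : ℝ) = 0 := by
        rw [real_inner_smul_left, real_inner_smul_right, real_inner_comm, hηξ]
        ring
      have hsq : ‖a • ξ + b • η‖ ^ 2 = 1 := by
        rw [norm_add_sq_real, horth]
        rw [norm_smul, norm_smul, hη1]
        have : (|a| * ‖ξ‖) ^ 2 = a ^ 2 * ‖ξ‖ ^ 2 := by
          rw [mul_pow, sq_abs]
        rw [Real.norm_eq_abs, Real.norm_eq_abs, this]
        have : a ^ 2 * ‖ξ‖ ^ 2 = τ ^ 2 / ‖ξ‖ ^ 2 := by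
          rw [ha]; field_simp
        rw [this, mul_one, sq_abs, hbsq]; ring
      have h0 : (0:ℝ) ≤ ‖a • ξ + b • η‖ := norm_nonneg _
      nlinarith [hsq, h0]
    · rw [inner_add_left, real_inner_smul_left, real_inner_smul_left, hηξ,
        real_inner_self_eq_norm_sq]
      rw [ha]; field_simp; ring

/-- If `f` is Schwartz on `ℝ^{1+n}` and its light ray transform vanishes
identically, then the Fourier transform `f̂(τ,ξ) = ∫ e^{-i(tτ + x·ξ)} f dt dx` vanishes at
every `(τ,ξ)` with `|τ| ≤ |ξ|`, i.e. on the closed space-like cone including the light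
cone: the light ray transform determines space-like singularities. -/
theorem light_ray_vanishes_implies_spacelike_fourier_vanishes
    (n : ℕ) (hn : 2 ≤ n)
    (f : SchwartzMap (ℝ × EuclideanSpace ℝ (Fin n)) ℂ)
    (hL : ∀ (z θ : EuclideanSpace ℝ (Fin n)), ‖θ‖ = 1 →
      (∫ s : ℝ, f (s, z + s • θ)) = 0) :
    ∀ (τ : ℝ) (ξ : EuclideanSpace ℝ (Fin n)), |τ| ≤ ‖ξ‖ →
      (∫ w : ℝ × EuclideanSpace ℝ (Fin n),
          Complex.exp (-(Complex.I * ((w.1 * τ + inner ℝ w.2 ξ : ℝ) : ℂ))) * f w) = 0 := by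
  intro τ ξ hτξ
  obtain ⟨θ, hθ1, hθξ⟩ := exists_unit_inner_eq n hn τ ξ hτξ
  set g : ℝ × EuclideanSpace ℝ (Fin n) → ℂ := fun w =>
    Complex.exp (-(Complex.I * ((w.1 * τ + inner ℝ w.2 ξ : ℝ) : ℂ))) * f w with hg
  -- integrability of g
  haveI : (volume : Measure (ℝ × EuclideanSpace ℝ (Fin n))).IsAddHaarMeasure := by
    rw [Measure.volume_eq_prod]; infer_instance
  have hfint : Integrable (fun w : ℝ × EuclideanSpace ℝ (Fin n) => f w) volume := f.integrable
  have hgcont : Continuous g := by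
    apply Continuous.mul _ f.continuous
    apply Complex.continuous_exp.comp
    apply Continuous.neg
    apply Continuous.mul continuous_const
    apply Continuous.comp Complex.continuous_ofReal
    exact (continuous_fst.mul continuous_const).add
      ((continuous_snd.inner continuous_const))
  have hgnorm : ∀ w, ‖g w‖ = ‖f w‖ := by
    intro w
    rw [hg]
    simp only [norm_mul]
    rw [Complex.norm_exp]
    have : (-(Complex.I * ((w.1 * τ + inner ℝ w.2 ξ : ℝ) : ℂ))).re = 0 := by simp
    rw [this, Real.exp_zero, one_mul]
  have hgint : Integrable g volume :=
    hfint.norm.mono' hgcont.aestronglyMeasurable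
      (Filter.Eventually.of_forall fun w => le_of_eq (hgnorm w))
  -- the shear map
  set φ : ℝ × EuclideanSpace ℝ (Fin n) → ℝ × EuclideanSpace ℝ (Fin n) := fun p => (p.1, p.2 + p.1 • θ) with hφdef
  have hφmeas : MeasurePreserving φ volume volume := by
    rw [Measure.volume_eq_prod]
    exact (MeasurePreserving.id volume).skew_product
      (by fun_prop)
      (Filter.Eventually.of_forall fun s => map_add_right_eq_self volume (s • θ))
  have hφemb : MeasurableEmbedding φ :=
    Homeomorph.measurableEmbedding
      { toFun := φ
        invFun := fun p => (p.1, p.2 - p.1 • θ)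
        left_inv := fun p => by simp [hφdef]
        right_inv := fun p => by simp [hφdef]
        continuous_toFun := by fun_prop
        continuous_invFun := by fun_prop }
  have key : (∫ w, g w) = ∫ p : ℝ × EuclideanSpace ℝ (Fin n), g (φ p) := (hφmeas.integral_comp hφemb g).symm
  rw [key]
  have hcomp : Integrable (fun p => g (φ p)) volume := by
    have := (hφmeas.integrable_comp_emb hφemb (g := g)).mpr hgint
    exact this
  rw [Measure.volume_eq_prod] at hcomp ⊢
  rw [integral_prod_symm _ hcomp]
  have inner_eq : ∀ z : EuclideanSpace ℝ (Fin n), (∫ s : ℝ, g (φ (s, z))) = 0 := by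
    intro z
    have hexp : ∀ s : ℝ, ((s * τ + inner ℝ (z + s • θ) ξ : ℝ) : ℂ)
        = ((inner ℝ z ξ : ℝ) : ℂ) := by
      intro s
      congr 1
      rw [inner_add_left, real_inner_smul_left, hθξ]
      ring
    have : (fun s : ℝ => g (φ (s, z)))
        = fun s : ℝ => Complex.exp (-(Complex.I * ((inner ℝ z ξ : ℝ) : ℂ))) * f (s, z + s • θ) := by
      funext s
      simp only [hg, hφdef, hexp s]
    rw [this, integral_const_mul, hL z θ hθ1, mul_zero]
  simp only [inner_eq, integral_zero]
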